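/- Let G be a topological group and K ⊆ G a compact open subgroup. Then for every x ∈ G the double coset KxK is a union of finitely many right cosets of K, i.e. the image of KxK in G/K is finite. In particular (G, K) is a good pair: for any two double cosets X, Y of K, the multiplication map m_{X,Y} has finite fibers and its image is a finite union of double cosets. -/

import Mathlib

open scoped Pointwise

/-- The double coset `K x K` of `x` with respect to the subgroup `K`. -/
def doubleCoset {G : Type*} [Group G] (K : Subgroup G) (x : G) : Set G :=
  {g | ∃ a ∈ K, ∃ b ∈ K, g = a * x * b}

/-- The orbit relation on the fiber of the multiplication map `m_{X,Y}` over `z`: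
`(p, q)` is identified with `(p * g⁻¹, g * q)` for `g ∈ K`. -/
def fiberRel {G : Type*} [Group G] (K : Subgroup G) (X Y : Set G) (z : G) :
    {pq : G × G // pq.1 ∈ X ∧ pq.2 ∈ Y ∧ pq.1 * pq.2 = z} →
    {pq : G × G // pq.1 ∈ X ∧ pq.2 ∈ Y ∧ pq.1 * pq.2 = z} → Prop :=
  fun p q => ∃ g ∈ K, q.1.1 = p.1.1 * g⁻¹ ∧ q.1.2 = g * p.1.2

lemma doubleCoset_eq {G : Type*} [Group G] (K : Subgroup G) (x : G) :
    doubleCoset K x = (K : Set G) * {x} * (K : Set G) := by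
  ext g
  simp only [doubleCoset, Set.mem_setOf_eq, Set.mem_mul, Set.mem_singleton_iff]
  constructor
  · rintro ⟨a, ha, b, hb, rfl⟩
    exact ⟨a * x, ⟨a, ha, x, rfl, rfl⟩, b, hb, rfl⟩
  · rintro ⟨_, ⟨a, ha, _, rfl, rfl⟩, b, hb, rfl⟩
    exact ⟨a, ha, b, hb, rfl⟩

lemma self_mem_doubleCoset {G : Type*} [Group G] (K : Subgroup G) (x : G) :
    x ∈ doubleCoset K x :=
  ⟨1, K.one_mem, 1, K.one_mem, by group⟩

/-- If `G` is a topological group and `K` a compact open subgroup, then every double coset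
`KxK` is a finite union of right cosets of `K` (its image in `G ⧸ K` is finite); in particular
`(G, K)` is a good pair: all fibers of the multiplication maps `m_{X,Y}` between double cosets
are finite, and the image of each `m_{X,Y}` is a finite union of double cosets. -/
theorem stmt3 {G : Type*} [Group G] [TopologicalSpace G] [IsTopologicalGroup G]
    (K : Subgroup G) (hKcompact : IsCompact (K : Set G)) (hKopen : IsOpen (K : Set G)) :
    (∀ x : G, ((QuotientGroup.mk (s := K)) '' doubleCoset K x).Finite) ∧
    ∀ x y : G,
      (∀ z : G, Finite (Quot (fiberRel K (doubleCoset K x) (doubleCoset K y) z))) ∧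
      ∃ F : Finset G, doubleCoset K x * doubleCoset K y = ⋃ f ∈ F, doubleCoset K f := by
  have hopen : ∀ x : G, IsOpen (doubleCoset K x) := fun x => by
    rw [doubleCoset_eq]; exact hKopen.mul_left
  have hcpt : ∀ x : G, IsCompact (doubleCoset K x) := fun x => by
    rw [doubleCoset_eq]; exact (hKcompact.mul isCompact_singleton).mul hKcompact
  have hleft : ∀ x : G, ∀ a ∈ K, ∀ p ∈ doubleCoset K x, a * p ∈ doubleCoset K x := by
    rintro x a ha p ⟨c, hc, d, hd, rfl⟩
    exact ⟨a * c, K.mul_mem ha hc, d, hd, by group⟩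
  have hright : ∀ x : G, ∀ b ∈ K, ∀ p ∈ doubleCoset K x, p * b ∈ doubleCoset K x := by
    rintro x b hb p ⟨c, hc, d, hd, rfl⟩
    exact ⟨c, hc, d * b, K.mul_mem hd hb, by group⟩
  have hfin : ∀ x : G, ((QuotientGroup.mk (s := K)) '' doubleCoset K x).Finite := by
    intro x
    obtain ⟨F, hF⟩ := (hcpt x).elim_finite_subcover (fun g : G => g • (K : Set G))
      (fun g => hKopen.smul g)
      (by
        intro w hw
        exact Set.mem_iUnion.mpr ⟨w, ⟨1, K.one_mem, by simp⟩⟩)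
    refine Set.Finite.subset (F.finite_toSet.image (QuotientGroup.mk (s := K))) ?_
    rintro c ⟨w, hw, rfl⟩
    have := hF hw
    simp only [Set.mem_iUnion] at this
    obtain ⟨g, hgF, hmem⟩ := this
    obtain ⟨k, hk, rfl⟩ := hmem
    refine ⟨g, hgF, ?_⟩
    have : QuotientGroup.mk (s := K) (g • k) = QuotientGroup.mk g := by
      rw [QuotientGroup.eq]
      simpa using hk
    exact this.symm
  refine ⟨hfin, fun x y => ⟨?_, ?_⟩⟩
  · intro z
    haveI := (hfin x).to_subtype
    refine Finite.of_injective
      (Quot.lift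
        (fun p : {pq : G × G // pq.1 ∈ doubleCoset K x ∧ pq.2 ∈ doubleCoset K y ∧
            pq.1 * pq.2 = z} =>
          (⟨QuotientGroup.mk (s := K) p.1.1, ⟨p.1.1, p.2.1, rfl⟩⟩ :
            ↥((QuotientGroup.mk (s := K)) '' doubleCoset K x)))
        ?_) ?_
    · rintro p q ⟨g, hg, h1, h2⟩
      apply Subtype.ext
      show QuotientGroup.mk p.1.1 = QuotientGroup.mk q.1.1
      rw [QuotientGroup.eq, h1]
      simpa using K.inv_mem hg
    · intro a b
      induction a using Quot.ind with
      | _ a =>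
      induction b using Quot.ind with
      | _ b =>
      intro hab
      simp only [Subtype.mk.injEq] at hab
      have hg : a.1.1⁻¹ * b.1.1 ∈ K := (QuotientGroup.eq).mp (congrArg Subtype.val hab)
      apply Quot.sound
      refine ⟨b.1.1⁻¹ * a.1.1, by simpa using K.inv_mem hg, by group, ?_⟩
      have ha := a.2.2.2
      have hb := b.2.2.2
      calc b.1.2 = b.1.1⁻¹ * (b.1.1 * b.1.2) := by group
        _ = b.1.1⁻¹ * (a.1.1 * a.1.2) := by rw [ha, hb]
        _ = b.1.1⁻¹ * a.1.1 * a.1.2 := by group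
  · have hsub : ∀ z ∈ doubleCoset K x * doubleCoset K y,
        doubleCoset K z ⊆ doubleCoset K x * doubleCoset K y := by
      intro z hz s hs
      obtain ⟨p, hp, q, hq, hpq⟩ := Set.mem_mul.mp hz
      obtain ⟨a, ha, b, hb, rfl⟩ := hs
      refine Set.mem_mul.mpr ⟨a * p, hleft x a ha p hp, q * b, hright y b hb q hq, ?_⟩
      rw [← hpq]; group
    obtain ⟨F, hF⟩ := ((hcpt x).mul (hcpt y)).elim_finite_subcover
      (fun z : ↥(doubleCoset K x * doubleCoset K y) => doubleCoset K (z : G))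
      (fun z => hopen _)
      (by
        intro s hs
        exact Set.mem_iUnion.mpr ⟨⟨s, hs⟩, self_mem_doubleCoset K s⟩)
    classical
    refine ⟨F.image Subtype.val, Set.Subset.antisymm ?_ ?_⟩
    · intro s hs
      have := hF hs
      simp only [Set.mem_iUnion] at this
      obtain ⟨z, hzF, hz⟩ := this
      exact Set.mem_biUnion (Finset.mem_image_of_mem _ hzF) hz
    · intro s hs
      simp only [Set.mem_iUnion, Finset.mem_image, Finset.mem_coe] at hs
      obtain ⟨f, ⟨z, hzF, rfl⟩, hsf⟩ := hs
      exact hsub _ z.2 hsf
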